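/- Let β ∈ (0,π) and α ∈ (0,2π) with α ≠ π be fixed. The function f(θ₁) = θ₁ + arccos(cos θ₁ cos β + sin θ₁ sin β cos α) is strictly monotonically increasing on [0,π]. -/

import Mathlib

open Real

theorem angle_sum_strict_mono
    (β α : ℝ) (hβ : β ∈ Set.Ioo 0 π) (hα : α ∈ Set.Ioo 0 (2 * π)) (hα' : α ≠ π) :
    StrictMonoOn
      (fun θ₁ : ℝ => θ₁ +
        Real.arccos (Real.cos θ₁ * Real.cos β + Real.sin θ₁ * Real.sin β * Real.cos α))
      (Set.Icc 0 π) := by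
  obtain ⟨hβ0, hβπ⟩ := hβ
  obtain ⟨hα0, hα2⟩ := hα
  have hπ := Real.pi_pos
  have hsinβ : 0 < Real.sin β := Real.sin_pos_of_pos_of_lt_pi hβ0 hβπ
  have hc1 : Real.cos α < 1 := by
    rcases lt_or_eq_of_le (Real.cos_le_one α) with h | h
    · exact h
    · exfalso
      obtain ⟨n, hn⟩ := (Real.cos_eq_one_iff α).1 h
      have h1 : (0 : ℝ) < (n : ℝ) := by nlinarith
      have h2 : (n : ℝ) < 1 := by nlinarith
      have h1' : (0 : ℤ) < n := by exact_mod_cast h1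
      have h2' : (n : ℤ) < 1 := by exact_mod_cast h2
      omega
  have hcm1 : -1 < Real.cos α := by
    rcases lt_or_eq_of_le (Real.neg_one_le_cos α) with h | h
    · exact h
    · exfalso
      obtain ⟨k, hk⟩ := Real.cos_eq_neg_one_iff.1 h.symm
      have h1 : (-1 : ℝ) < (k : ℝ) := by nlinarith
      have h2 : (k : ℝ) < 1 := by nlinarith
      have h1' : (-1 : ℤ) < k := by exact_mod_cast h1
      have h2' : (k : ℤ) < 1 := by exact_mod_cast h2
      have : k = 0 := by omega
      rw [this] at hk
      exact hα' (by push_cast at hk; linarith)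
  set c := Real.cos α with hc
  have hc2 : c ^ 2 < 1 := by nlinarith
  -- key inequality: g² + g'² < 1
  have key : ∀ θ : ℝ,
      (Real.cos θ * Real.cos β + Real.sin θ * Real.sin β * c) ^ 2 +
      (-Real.sin θ * Real.cos β + Real.cos θ * Real.sin β * c) ^ 2 < 1 := by
    intro θ
    have hexp : (Real.cos θ * Real.cos β + Real.sin θ * Real.sin β * c) ^ 2 +
        (-Real.sin θ * Real.cos β + Real.cos θ * Real.sin β * c) ^ 2
        = Real.cos β ^ 2 + c ^ 2 * Real.sin β ^ 2 := by
      linear_combination (Real.cos β ^ 2 + c ^ 2 * Real.sin β ^ 2) * Real.sin_sq_add_cos_sq θ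
    rw [hexp]
    have h2 := Real.sin_sq_add_cos_sq β
    nlinarith [mul_pos hsinβ hsinβ]
  have deriv_pos : ∀ θ : ℝ, HasDerivAt
      (fun θ₁ : ℝ => θ₁ +
        Real.arccos (Real.cos θ₁ * Real.cos β + Real.sin θ₁ * Real.sin β * Real.cos α))
      (1 + -(1 / Real.sqrt (1 - (Real.cos θ * Real.cos β + Real.sin θ * Real.sin β * c) ^ 2)) *
        (-Real.sin θ * Real.cos β + Real.cos θ * Real.sin β * c)) θ ∧
      0 < (1 + -(1 / Real.sqrt (1 - (Real.cos θ * Real.cos β + Real.sin θ * Real.sin β * c) ^ 2)) *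
        (-Real.sin θ * Real.cos β + Real.cos θ * Real.sin β * c)) := by
    intro θ
    set g := Real.cos θ * Real.cos β + Real.sin θ * Real.sin β * c with hg
    set g' := -Real.sin θ * Real.cos β + Real.cos θ * Real.sin β * c with hg'
    have hkey : g ^ 2 + g' ^ 2 < 1 := key θ
    have hg2 : g ^ 2 < 1 := by nlinarith [sq_nonneg g']
    have hgabs : |g| < 1 := by
      rw [abs_lt]; constructor <;> nlinarith
    have hne1 : g ≠ 1 := by intro h; rw [h] at hgabs; simp at hgabs
    have hnem1 : g ≠ -1 := by intro h; rw [h] at hgabs; simp at hgabs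
    have hgd : HasDerivAt (fun θ₁ : ℝ =>
        Real.cos θ₁ * Real.cos β + Real.sin θ₁ * Real.sin β * c) g' θ := by
      have h1 : HasDerivAt (fun θ₁ : ℝ => Real.cos θ₁ * Real.cos β)
          (-Real.sin θ * Real.cos β) θ := (Real.hasDerivAt_cos θ).mul_const _
      have h2 : HasDerivAt (fun θ₁ : ℝ => Real.sin θ₁ * Real.sin β * c)
          (Real.cos θ * Real.sin β * c) θ :=
        ((Real.hasDerivAt_sin θ).mul_const _).mul_const _
      exact h1.add h2
    have harc : HasDerivAt (fun θ₁ : ℝ =>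
        Real.arccos (Real.cos θ₁ * Real.cos β + Real.sin θ₁ * Real.sin β * c))
        (-(1 / Real.sqrt (1 - g ^ 2)) * g') θ :=
      HasDerivAt.comp (h₂ := Real.arccos) θ (Real.hasDerivAt_arccos hnem1 hne1) hgd
    have hfd : HasDerivAt (fun θ₁ : ℝ => θ₁ +
        Real.arccos (Real.cos θ₁ * Real.cos β + Real.sin θ₁ * Real.sin β * c))
        (1 + -(1 / Real.sqrt (1 - g ^ 2)) * g') θ := (hasDerivAt_id θ).add harc
    refine ⟨hfd, ?_⟩
    have hs : 0 < Real.sqrt (1 - g ^ 2) := Real.sqrt_pos.2 (by nlinarith)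
    have hs2 : Real.sqrt (1 - g ^ 2) ^ 2 = 1 - g ^ 2 := Real.sq_sqrt (by nlinarith)
    have hglt : g' < Real.sqrt (1 - g ^ 2) := by nlinarith [hkey, hs, hs2]
    have : 1 + -(1 / Real.sqrt (1 - g ^ 2)) * g'
        = (Real.sqrt (1 - g ^ 2) - g') / Real.sqrt (1 - g ^ 2) := by
      field_simp
      ring
    rw [this]
    exact div_pos (by linarith) hs
  have : StrictMono (fun θ₁ : ℝ => θ₁ +
      Real.arccos (Real.cos θ₁ * Real.cos β + Real.sin θ₁ * Real.sin β * Real.cos α)) := by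
    apply strictMono_of_deriv_pos
    intro θ
    rw [(deriv_pos θ).1.deriv]
    exact (deriv_pos θ).2
  exact this.strictMonoOn _
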